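/- arXiv:2006.00542 — 3 statements merged into one kernel-verified Lean document; each statement's English description precedes it below -/
import Mathlib

section
/- Let $G$ be a finite group acting on a unital C*-algebra $A$ by automorphisms $\alpha : G \to \mathrm{Aut}(A)$, and let $A^\alpha = \{a \in A : \alpha_g(a) = a \text{ for all } g\}$ be the fixed point algebra. Suppose there is a sequence of unital linear maps $\psi_j : A \to A^\alpha$ such that $\|\psi_j(a) - a\| \to 0$ for all $a \in A^\alpha$ and $\|\psi_j(ab) - \psi_j(a)\psi_j(b)\| \to 0$ for all $a,b \in A$. If $n \geq 1$ is such that $GL_n(A)$ acts transitively on $Lg_n(A)$, then $GL_n(A^\alpha)$ acts transitively on $Lg_n(A^\alpha)$; in particular $gsr(A^\alpha) \leq gsr(A)$. -/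
/-- A vector `v ∈ Aⁿ` is left unimodular if `∑ i, b i * v i = 1` for some `b`. -/
def IsLeftUnimodular {A : Type*} [Ring A] {n : ℕ} (v : Fin n → A) : Prop :=
  ∃ b : Fin n → A, ∑ i, b i * v i = 1

/-- `GL_n(A)` acts transitively on `Lg_n(A)`. -/
def GLActsTransitively (A : Type*) [Ring A] (n : ℕ) : Prop :=
  ∀ v w : Fin n → A, IsLeftUnimodular v → IsLeftUnimodular w →
    ∃ T : (Matrix (Fin n) (Fin n) A)ˣ, T.val.mulVec v = w

/-- The general stable rank: the least `n ≥ 1` such that `GL_m` acts transitively on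
`Lg_m` for all `m ≥ n` (`⊤` if there is no such `n`). -/
noncomputable def gsr (A : Type*) [Ring A] : ℕ∞ :=
  sInf {n : ℕ∞ | 1 ≤ n ∧ ∀ m : ℕ, n ≤ (m : ℕ∞) → GLActsTransitively A m}

/-- The fixed point subalgebra `A^α` of an action `α` of a group `G` on `A`. -/
def fixedSubalgebra {A : Type*} [NormedRing A] [NormedAlgebra ℂ A] {G : Type*} [Group G]
    (α : G →* (A ≃ₐ[ℂ] A)) : Subalgebra ℂ A where
  carrier := {a | ∀ g, α g a = a}
  mul_mem' := by intro a b ha hb g; rw [map_mul, ha g, hb g]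
  add_mem' := by intro a b ha hb g; rw [map_add, ha g, hb g]
  algebraMap_mem' := by intro r g; exact (α g).commutes r

open Filter

attribute [local instance] Matrix.linftyOpSeminormedAddCommGroup
  Matrix.linftyOpNormedAddCommGroup Matrix.linftyOpNormedRing

section MatrixAux

variable {A : Type*} [NormedRing A] [CompleteSpace A] {n : ℕ}

noncomputable local instance : CompleteSpace (PiLp 1 fun _ : Fin n => A) :=
  inferInstance

noncomputable local instance matrixComplete : CompleteSpace (Matrix (Fin n) (Fin n) A) :=
  (inferInstance : CompleteSpace (Fin n → Fin n → A))

omit [CompleteSpace A] in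
lemma norm_le_sum_entries' (M : Matrix (Fin n) (Fin n) A) : ‖M‖ ≤ ∑ i, ∑ k, ‖M i k‖ := by
  have h : ‖M‖₊ ≤ ∑ i, ∑ k, ‖M i k‖₊ := by
    rw [Matrix.linfty_opNNNorm_def]
    exact Finset.sup_le fun i _ =>
      Finset.single_le_sum (f := fun i => ∑ k, ‖M i k‖₊) (fun _ _ => zero_le)
        (Finset.mem_univ i)
  calc ‖M‖ = ((‖M‖₊ : ℝ)) := rfl
    _ ≤ ((∑ i, ∑ k, ‖M i k‖₊ : NNReal) : ℝ) := by exact_mod_cast h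
    _ = ∑ i, ∑ k, ‖M i k‖ := by push_cast; rfl

omit [CompleteSpace A] in
lemma tendsto_norm_zero_of_entries' {M : ℕ → Matrix (Fin n) (Fin n) A}
    (h : ∀ i k, Tendsto (fun j => ‖M j i k‖) atTop (nhds 0)) :
    Tendsto (fun j => ‖M j‖) atTop (nhds 0) := by
  have hb : Tendsto (fun j => ∑ i, ∑ k, ‖M j i k‖) atTop (nhds 0) := by
    have := tendsto_finset_sum (Finset.univ : Finset (Fin n))
      (f := fun (i : Fin n) (j : ℕ) => ∑ k, ‖M j i k‖)
      (fun i _ => tendsto_finset_sum Finset.univ (fun k _ => h i k))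
    simpa using this
  exact squeeze_zero (fun j => norm_nonneg _) (fun j => norm_le_sum_entries' _) hb

lemma isUnit_near_one' (M : Matrix (Fin n) (Fin n) A) (h : ‖M - 1‖ < 1) : IsUnit M := by
  haveI : @CompleteSpace (Matrix (Fin n) (Fin n) A)
      (PseudoMetricSpace.toUniformSpace (α := Matrix (Fin n) (Fin n) A)) :=
    (inferInstance : CompleteSpace (Fin n → Fin n → A))
  have := (Units.oneSub (1 - M) (by rwa [norm_sub_rev] at h)).isUnit
  simpa [sub_sub_cancel] using this

end MatrixAux

lemma isUnit_of_isUnit_mul_both {M : Type*} [Monoid M] {x y : M}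
    (h1 : IsUnit (x * y)) (h2 : IsUnit (y * x)) : IsUnit x := by
  obtain ⟨u, hu⟩ := h1
  obtain ⟨v, hv⟩ := h2
  have hr : x * (y * ↑u⁻¹) = 1 := by rw [← mul_assoc, ← hu, Units.mul_inv]
  have hl : (↑v⁻¹ * y) * x = 1 := by rw [mul_assoc, ← hv, Units.inv_mul]
  have heq : (↑v⁻¹ * y : M) = y * ↑u⁻¹ := by
    calc (↑v⁻¹ * y : M) = (↑v⁻¹ * y) * (x * (y * ↑u⁻¹)) := by rw [hr, mul_one]
      _ = ((↑v⁻¹ * y) * x) * (y * ↑u⁻¹) := by simp only [mul_assoc]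
      _ = y * ↑u⁻¹ := by rw [hl, one_mul]
  exact ⟨⟨x, y * ↑u⁻¹, hr, heq ▸ hl⟩, rfl⟩

set_option maxHeartbeats 2000000 in
lemma transfer_GL {A : Type*} [NormedRing A] [NormedAlgebra ℂ A] [CompleteSpace A]
    {G : Type*} [Group G] (α : G →* (A ≃ₐ[ℂ] A))
    (ψ : ℕ → A →ₗ[ℂ] A)
    (hψfix : ∀ j a, ψ j a ∈ fixedSubalgebra α)
    (hψone : ∀ j, ψ j 1 = 1)
    (hψid : ∀ a ∈ fixedSubalgebra α,
      Tendsto (fun j => ‖ψ j a - a‖) atTop (nhds 0))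
    (hψmul : ∀ a b : A,
      Tendsto (fun j => ‖ψ j (a * b) - ψ j a * ψ j b‖) atTop (nhds 0))
    (n : ℕ) (hA : GLActsTransitively A n) :
    GLActsTransitively (fixedSubalgebra α) n := by
  classical
  set B := fixedSubalgebra α with hBdef
  intro v w hv hw
  obtain ⟨bv, hbv⟩ := hv
  obtain ⟨bw, hbw⟩ := hw
  set v' : Fin n → A := fun i => (v i : A) with hv'def
  set w' : Fin n → A := fun i => (w i : A) with hw'def
  have hbv' : ∑ i, (bv i : A) * v' i = 1 := by
    show ∑ i, (bv i : A) * ((v i : A)) = 1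
    exact_mod_cast congrArg Subtype.val hbv
  have hbw' : ∑ i, (bw i : A) * w' i = 1 := by
    show ∑ i, (bw i : A) * ((w i : A)) = 1
    exact_mod_cast congrArg Subtype.val hbw
  obtain ⟨T, hT⟩ := hA v' w' ⟨fun i => (bv i : A), hbv'⟩ ⟨fun i => (bw i : A), hbw'⟩
  -- approximants
  set S : ℕ → Matrix (Fin n) (Fin n) A := fun j => T.val.map (ψ j) with hSdef
  set R : ℕ → Matrix (Fin n) (Fin n) A := fun j => T.inv.map (ψ j) with hRdef
  set x : ℕ → Fin n → A := fun j m => ψ j (v' m) with hxdef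
  set y : ℕ → Fin n → A := fun j => (S j).mulVec (x j) with hydef
  have hmap_one : ∀ j, (1 : Matrix (Fin n) (Fin n) A).map (ψ j) = 1 := by
    intro j
    ext i k
    by_cases h : i = k <;>
      simp [Matrix.map_apply, Matrix.one_apply, h, hψone j]
  -- asymptotic multiplicativity, matrix version
  have hprod : ∀ X Y : Matrix (Fin n) (Fin n) A,
      Tendsto (fun j => ‖X.map (ψ j) * Y.map (ψ j) - (X * Y).map (ψ j)‖) atTop (nhds 0) := by
    intro X Y
    apply tendsto_norm_zero_of_entries'
    intro i k
    have hterm : ∀ m : Fin n,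
        Tendsto (fun j => ‖ψ j (X i m) * ψ j (Y m k) - ψ j (X i m * Y m k)‖) atTop (nhds 0) :=
      fun m => Filter.Tendsto.congr (fun j => norm_sub_rev _ _) (hψmul (X i m) (Y m k))
    have hentry : ∀ j, (X.map (ψ j) * Y.map (ψ j) - (X * Y).map (ψ j)) i k
        = ∑ m, (ψ j (X i m) * ψ j (Y m k) - ψ j (X i m * Y m k)) := by
      intro j
      simp [Matrix.sub_apply, Matrix.mul_apply, Matrix.map_apply, map_sum,
        Finset.sum_sub_distrib]
    have hbound : Tendsto
        (fun j => ∑ m, ‖ψ j (X i m) * ψ j (Y m k) - ψ j (X i m * Y m k)‖) atTop (nhds 0) := by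
      simpa using tendsto_finset_sum Finset.univ (fun m _ => hterm m)
    refine squeeze_zero (fun j => norm_nonneg _) (fun j => ?_) hbound
    rw [hentry]
    exact norm_sum_le _ _
  have hSR : ∀ᶠ j in atTop, ‖S j * R j - 1‖ < 1 := by
    have h1 := hprod T.val T.inv
    rw [T.val_inv] at h1
    simp only [hmap_one] at h1
    exact h1.eventually_lt_const one_pos
  have hRS : ∀ᶠ j in atTop, ‖R j * S j - 1‖ < 1 := by
    have h1 := hprod T.inv T.val
    rw [T.inv_val] at h1
    simp only [hmap_one] at h1
    exact h1.eventually_lt_const one_pos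
  -- x j → v'
  have hxv : ∀ i, Tendsto (fun j => ‖x j i - v' i‖) atTop (nhds 0) :=
    fun i => hψid (v' i) (v i).2
  -- y j → w'
  have hyw : ∀ i, Tendsto (fun j => ‖y j i - w' i‖) atTop (nhds 0) := by
    intro i
    have hTv : ∑ m, T.val i m * v' m = w' i := by
      have := congrFun hT i
      simpa [Matrix.mulVec, dotProduct] using this
    have hdecomp : ∀ j, y j i - w' i =
        (∑ m, (ψ j (T.val i m) * ψ j (v' m) - ψ j (T.val i m * v' m)))
          + (ψ j (w' i) - w' i) := by
      intro j
      have hw1 : ψ j (w' i) = ∑ m, ψ j (T.val i m * v' m) := by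
        rw [← map_sum, hTv]
      have hy1 : y j i = ∑ m, ψ j (T.val i m) * ψ j (v' m) := rfl
      rw [hy1, Finset.sum_sub_distrib]
      rw [hw1]
      abel
    have h1 : Tendsto (fun j => y j i - w' i) atTop (nhds 0) := by
      have h0 : Tendsto (fun j =>
          (∑ m, (ψ j (T.val i m) * ψ j (v' m) - ψ j (T.val i m * v' m)))
            + (ψ j (w' i) - w' i)) atTop (nhds (0 + 0)) := by
        apply Tendsto.add
        · have hm : ∀ m : Fin n, Tendsto
              (fun j => ψ j (T.val i m) * ψ j (v' m) - ψ j (T.val i m * v' m))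
              atTop (nhds 0) := by
            intro m
            have h := tendsto_zero_iff_norm_tendsto_zero.mpr (hψmul (T.val i m) (v' m))
            have h2 := h.neg
            rw [neg_zero] at h2
            exact h2.congr (fun j => neg_sub _ _)
          simpa using tendsto_finset_sum Finset.univ (fun m _ => hm m)
        · exact tendsto_zero_iff_norm_tendsto_zero.mpr (hψid (w' i) (w i).2)
      rw [add_zero] at h0
      exact h0.congr (fun j => (hdecomp j).symm)
    exact tendsto_zero_iff_norm_tendsto_zero.mp h1
  -- perturbation matrices
  set E : ℕ → Matrix (Fin n) (Fin n) A :=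
    fun j => Matrix.of fun i k => (x j i - v' i) * (bv k : A) with hEdef
  set F : ℕ → Matrix (Fin n) (Fin n) A :=
    fun j => Matrix.of fun i k => (y j i - w' i) * (bw k : A) with hFdef
  have hEsmall : ∀ᶠ j in atTop, ‖E j‖ < 1 := by
    have hE0 : Tendsto (fun j => ‖E j‖) atTop (nhds 0) := by
      apply tendsto_norm_zero_of_entries'
      intro i k
      refine squeeze_zero (fun j => norm_nonneg _) (fun j => norm_mul_le _ _) ?_
      simpa using (hxv i).mul_const ‖(bv k : A)‖
    exact hE0.eventually_lt_const one_pos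
  have hFsmall : ∀ᶠ j in atTop, ‖F j‖ < 1 := by
    have hF0 : Tendsto (fun j => ‖F j‖) atTop (nhds 0) := by
      apply tendsto_norm_zero_of_entries'
      intro i k
      refine squeeze_zero (fun j => norm_nonneg _) (fun j => norm_mul_le _ _) ?_
      simpa using (hyw i).mul_const ‖(bw k : A)‖
    exact hF0.eventually_lt_const one_pos
  obtain ⟨j, hjall⟩ := ((hSR.and hRS).and (hEsmall.and hFsmall)).exists
  obtain ⟨⟨hj1, hj2⟩, hj3, hj4⟩ := hjall
  -- S j is invertible
  obtain ⟨U, hU⟩ : IsUnit (S j) :=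
    isUnit_of_isUnit_mul_both (isUnit_near_one' _ hj1) (isUnit_near_one' _ hj2)
  -- the perturbation units
  obtain ⟨M₁, hM₁⟩ : IsUnit ((1 : Matrix (Fin n) (Fin n) A) + E j) := by
    apply isUnit_near_one'
    simpa using hj3
  obtain ⟨N, hN⟩ : IsUnit ((1 : Matrix (Fin n) (Fin n) A) + F j) := by
    apply isUnit_near_one'
    simpa using hj4
  -- mulVec computations
  have hM1v : ((1 : Matrix (Fin n) (Fin n) A) + E j).mulVec v' = x j := by
    funext i
    have hEv : ((E j).mulVec v') i = x j i - v' i := by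
      have hassoc : ∀ k, (x j i - v' i) * (bv k : A) * v' k
          = (x j i - v' i) * ((bv k : A) * v' k) := fun k => mul_assoc _ _ _
      simp only [Matrix.mulVec, dotProduct, hEdef, Matrix.of_apply, hassoc]
      rw [← Finset.mul_sum, hbv', mul_one]
    simp only [Matrix.add_mulVec, Matrix.one_mulVec, Pi.add_apply, hEv]
    abel
  have hNw : ((1 : Matrix (Fin n) (Fin n) A) + F j).mulVec w' = y j := by
    funext i
    have hFv : ((F j).mulVec w') i = y j i - w' i := by
      have hassoc : ∀ k, (y j i - w' i) * (bw k : A) * w' k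
          = (y j i - w' i) * ((bw k : A) * w' k) := fun k => mul_assoc _ _ _
      simp only [Matrix.mulVec, dotProduct, hFdef, Matrix.of_apply, hassoc]
      rw [← Finset.mul_sum, hbw', mul_one]
    simp only [Matrix.add_mulVec, Matrix.one_mulVec, Pi.add_apply, hFv]
    abel
  -- the candidate unit over A
  set P : (Matrix (Fin n) (Fin n) A)ˣ := N⁻¹ * U * M₁ with hPdef
  have hPval : P.val
      = (Units.val N⁻¹ : Matrix (Fin n) (Fin n) A) * (S j * ((1 : Matrix (Fin n) (Fin n) A) + E j)) := by
    rw [hPdef]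
    simp only [Units.val_mul, hU, hM₁, mul_assoc]
  have hPv : P.val.mulVec v' = w' := by
    have h2 : (S j * ((1 : Matrix (Fin n) (Fin n) A) + E j)).mulVec v' = y j := by
      rw [← Matrix.mulVec_mulVec, hM1v]
    have h3 : (Units.val N⁻¹ : Matrix (Fin n) (Fin n) A).mulVec (y j) = w' := by
      have h4 : (Units.val N⁻¹ : Matrix (Fin n) (Fin n) A).mulVec
          (((1 : Matrix (Fin n) (Fin n) A) + F j).mulVec w') = w' := by
        rw [Matrix.mulVec_mulVec, ← hN, Units.inv_mul, Matrix.one_mulVec]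
      rwa [hNw] at h4
    rw [hPval, ← Matrix.mulVec_mulVec, h2, h3]
  -- memberships
  have hone_mem : ∀ i k : Fin n, (1 : Matrix (Fin n) (Fin n) A) i k ∈ B := by
    intro i k
    by_cases h : i = k <;> simp [Matrix.one_apply, h, one_mem, zero_mem]
  have hS_mem : ∀ i k, S j i k ∈ B := fun i k => hψfix j _
  have hE_mem : ∀ i k, E j i k ∈ B := fun i k =>
    mul_mem (sub_mem (hψfix j _) (v i).2) (bv k).2
  have hy_mem : ∀ i, y j i ∈ B := by
    intro i
    have hyi : y j i = ∑ m, S j i m * x j m := rfl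
    rw [hyi]
    exact Subalgebra.sum_mem _ (fun m _ => mul_mem (hψfix j _) (hψfix j _))
  have hF_mem : ∀ i k, F j i k ∈ B := fun i k =>
    mul_mem (sub_mem (hy_mem i) (w i).2) (bw k).2
  have hmulmem : ∀ (X Y : Matrix (Fin n) (Fin n) A), (∀ i k, X i k ∈ B) → (∀ i k, Y i k ∈ B) →
      ∀ i k, (X * Y) i k ∈ B := by
    intro X Y hX hY i k
    rw [Matrix.mul_apply]
    exact Subalgebra.sum_mem _ fun m _ => mul_mem (hX i m) (hY m k)
  have haddmem : ∀ (X Y : Matrix (Fin n) (Fin n) A), (∀ i k, X i k ∈ B) → (∀ i k, Y i k ∈ B) →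
      ∀ i k, (X + Y) i k ∈ B := by
    intro X Y hX hY i k
    rw [Matrix.add_apply]
    exact add_mem (hX i k) (hY i k)
  -- inverses of fixed units are fixed
  have hinv_mem : ∀ (X : (Matrix (Fin n) (Fin n) A)ˣ), (∀ i k, X.val i k ∈ B) →
      ∀ i k, X.inv i k ∈ B := by
    intro X hX i k
    show ∀ g, α g (X.inv i k) = X.inv i k
    intro g
    set e := (AlgEquiv.mapMatrix (α g) : Matrix (Fin n) (Fin n) A ≃ₐ[ℂ] Matrix (Fin n) (Fin n) A)
      with hedef
    have hfix : e X.val = X.val := by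
      ext i' k'
      exact hX i' k' g
    have h2 : e X.inv = X.inv := by
      calc e X.inv = e X.inv * (X.val * X.inv) := by rw [X.val_inv, mul_one]
        _ = (e X.inv * e X.val) * X.inv := by rw [← mul_assoc, hfix]
        _ = e (X.inv * X.val) * X.inv := by rw [map_mul]
        _ = X.inv := by rw [X.inv_val, map_one, one_mul]
    calc (α g) (X.inv i k) = (e X.inv) i k := by
          rw [hedef]
          simp [AlgEquiv.mapMatrix_apply, Matrix.map_apply]
      _ = X.inv i k := by rw [h2]
  have hNinv_mem : ∀ i k, (Units.val N⁻¹ : Matrix (Fin n) (Fin n) A) i k ∈ B := by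
    have hNv : ∀ i k, N.val i k ∈ B := by
      rw [hN]
      exact haddmem _ _ hone_mem hF_mem
    exact hinv_mem N hNv
  have hPval_mem : ∀ i k, P.val i k ∈ B := by
    intro i k
    rw [hPval]
    exact hmulmem _ _ hNinv_mem (hmulmem _ _ hS_mem (haddmem _ _ hone_mem hE_mem)) i k
  have hPinv_mem : ∀ i k, P.inv i k ∈ B := hinv_mem P hPval_mem
  -- lift to a unit over B
  let ρ : Matrix (Fin n) (Fin n) B →+* Matrix (Fin n) (Fin n) A :=
    RingHom.mapMatrix (B.val.toRingHom)
  have hρinj : Function.Injective ρ := by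
    intro X Y h
    ext i k
    exact congrFun (congrFun h i) k
  set Xb : Matrix (Fin n) (Fin n) B :=
    Matrix.of fun i k => (⟨P.val i k, hPval_mem i k⟩ : B) with hXbdef
  set Yb : Matrix (Fin n) (Fin n) B :=
    Matrix.of fun i k => (⟨P.inv i k, hPinv_mem i k⟩ : B) with hYbdef
  have hρX : ρ Xb = P.val := by ext i k; rfl
  have hρY : ρ Yb = P.inv := by ext i k; rfl
  have hXY : Xb * Yb = 1 := by
    apply hρinj
    rw [map_mul, map_one, hρX, hρY, P.val_inv]
  have hYX : Yb * Xb = 1 := by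
    apply hρinj
    rw [map_mul, map_one, hρX, hρY, P.inv_val]
  refine ⟨⟨Xb, Yb, hXY, hYX⟩, ?_⟩
  funext i
  refine Subtype.ext ?_
  have hc : ((Xb.mulVec v) i : A) = (P.val.mulVec v') i := by
    show ((∑ k, Xb i k * v k : B) : A) = ∑ k, P.val i k * v' k
    push_cast
    rfl
  show ((Xb.mulVec v) i : A) = (w i : A)
  rw [hc, hPv]

/-- Let a finite group `G` act on a unital C*-algebra `A` by `α`, with fixed point
algebra `A^α`.  Suppose there are unital linear maps `ψ_j : A → A^α` with
`‖ψ_j a - a‖ → 0` for `a ∈ A^α` and `‖ψ_j (a b) - ψ_j a · ψ_j b‖ → 0` for all `a, b`.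
If `GL_n(A)` acts transitively on `Lg_n(A)`, then `GL_n(A^α)` acts transitively on
`Lg_n(A^α)`; in particular `gsr (A^α) ≤ gsr A`. -/
theorem stmt_13 {A : Type*} [NormedRing A] [StarRing A] [CStarRing A]
    [NormedAlgebra ℂ A] [CompleteSpace A] [StarModule ℂ A]
    {G : Type*} [Group G] [Finite G] (α : G →* (A ≃ₐ[ℂ] A))
    (hstar : ∀ g (a : A), α g (star a) = star (α g a))
    (ψ : ℕ → A →ₗ[ℂ] A)
    (hψfix : ∀ j a, ψ j a ∈ fixedSubalgebra α)
    (hψone : ∀ j, ψ j 1 = 1)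
    (hψid : ∀ a ∈ fixedSubalgebra α,
      Filter.Tendsto (fun j => ‖ψ j a - a‖) Filter.atTop (nhds 0))
    (hψmul : ∀ a b : A,
      Filter.Tendsto (fun j => ‖ψ j (a * b) - ψ j a * ψ j b‖) Filter.atTop (nhds 0)) :
    (∀ n : ℕ, GLActsTransitively A n → GLActsTransitively (fixedSubalgebra α) n) ∧
      gsr (fixedSubalgebra α) ≤ gsr A := by
  constructor
  · exact fun n => transfer_GL α ψ hψfix hψone hψid hψmul n
  · apply sInf_le_sInf
    rintro m ⟨h1, h2⟩
    exact ⟨h1, fun k hk => transfer_GL α ψ hψfix hψone hψid hψmul k (h2 k hk)⟩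
end

section
/- Let $A$ be a unital C*-algebra, $n \geq 1$, and $v \in Lg_n(A)$. The orbit $GL_n^0(A) \cdot v \subseteq A^n$ is both open and closed in $Lg_n(A)$ (with the subspace topology from $A^n$). Consequently, if $Lg_n(A)$ is connected and contains $e_n = (0,\ldots,0,1)$, then $GL_n^0(A)$ acts transitively on $Lg_n(A)$ if and only if every orbit meets every other orbit's closure; in particular connectedness of $Lg_n(A)$ implies transitivity of the $GL_n^0(A)$-action given that orbits are open. -/
/-- `GL_n^0(A)` acts transitively on `Lg_n(A)`. -/
def GLZeroActsTransitively (A : Type*) [Ring A] [TopologicalSpace A] (n : ℕ) : Prop :=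
  ∀ v w : Fin n → A, IsLeftUnimodular v → IsLeftUnimodular w →
    ∃ T : (Matrix (Fin n) (Fin n) A)ˣ,
      T ∈ connectedComponent (1 : (Matrix (Fin n) (Fin n) A)ˣ) ∧ T.val.mulVec v = w

set_option linter.unusedSectionVars false

open Matrix

section Aux

variable {A : Type*} [NormedRing A] [NormedAlgebra ℂ A] [CompleteSpace A] {n : ℕ}

/-- The elementary unit `1 + u bᵀ`, invertible since `1 + ∑ b j * u j` is. -/
def elemUnit (u b : Fin n → A) (e : Aˣ) (he : (e : A) = 1 + ∑ j, b j * u j) :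
    (Matrix (Fin n) (Fin n) A)ˣ where
  val := 1 + Matrix.of fun i j => u i * b j
  inv := 1 - Matrix.of fun i j => u i * ((↑e⁻¹ : A) * b j)
  val_inv := by
    set t := ∑ j, b j * u j with ht
    set C : Matrix (Fin n) (Fin n) A := Matrix.of fun i j => u i * b j with hC
    set D : Matrix (Fin n) (Fin n) A := Matrix.of fun i j => u i * ((↑e⁻¹ : A) * b j) with hD
    have key : ((1 : A) + t) * (↑e⁻¹ : A) = 1 := by rw [← he]; exact e.mul_inv
    have hCD : C = D + C * D := by
      ext i j
      have hsum : (C * D) i j = u i * (t * ((↑e⁻¹ : A) * b j)) := by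
        simp only [hC, hD, Matrix.mul_apply, Matrix.of_apply, ht, Finset.sum_mul,
          Finset.mul_sum]
        exact Finset.sum_congr rfl fun k _ => by simp only [mul_assoc]
      rw [Matrix.add_apply, hsum]
      simp only [hC, hD, Matrix.of_apply]
      calc u i * b j = u i * ((((1 : A) + t) * (↑e⁻¹ : A)) * b j) := by rw [key, one_mul]
        _ = u i * ((↑e⁻¹ : A) * b j) + u i * (t * ((↑e⁻¹ : A) * b j)) := by
            rw [one_add_mul, add_mul, mul_add]; simp [mul_assoc]
    have expand : (1 + C) * (1 - D) = 1 + (C - (D + C * D)) := by noncomm_ring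
    rw [expand, ← hCD, sub_self, add_zero]
  inv_val := by
    set t := ∑ j, b j * u j with ht
    set C : Matrix (Fin n) (Fin n) A := Matrix.of fun i j => u i * b j with hC
    set D : Matrix (Fin n) (Fin n) A := Matrix.of fun i j => u i * ((↑e⁻¹ : A) * b j) with hD
    have key : (↑e⁻¹ : A) * ((1 : A) + t) = 1 := by rw [← he]; exact e.inv_mul
    have hDC : C = D + D * C := by
      ext i j
      have hsum : (D * C) i j = u i * ((↑e⁻¹ : A) * (t * b j)) := by
        simp only [hC, hD, Matrix.mul_apply, Matrix.of_apply, ht, Finset.sum_mul,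
          Finset.mul_sum]
        exact Finset.sum_congr rfl fun k _ => by simp only [mul_assoc]
      rw [Matrix.add_apply, hsum]
      simp only [hC, hD, Matrix.of_apply]
      calc u i * b j = u i * (((↑e⁻¹ : A) * ((1 : A) + t)) * b j) := by rw [key, one_mul]
        _ = u i * ((↑e⁻¹ : A) * b j) + u i * ((↑e⁻¹ : A) * (t * b j)) := by
            rw [mul_add, add_mul, mul_add]; simp [mul_assoc]
    have expand : (1 - D) * (1 + C) = 1 + (C - (D + D * C)) := by noncomm_ring
    rw [expand, ← hDC, sub_self, add_zero]

lemma elemUnit_mem_component (u b : Fin n → A) (h : ‖∑ j, b j * u j‖ < 1)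
    (T : (Matrix (Fin n) (Fin n) A)ˣ)
    (hT : T.val = 1 + Matrix.of fun i j => u i * b j) :
    T ∈ connectedComponent (1 : (Matrix (Fin n) (Fin n) A)ˣ) := by
  set t := ∑ j, b j * u j with ht
  set D : Set ℂ := {s : ℂ | ‖s‖ * ‖t‖ < 1} with hDdef
  have hmem : ∀ s ∈ D, ‖-(s • t)‖ < 1 := by
    intro s hs
    rwa [norm_neg, norm_smul]
  have hval : ∀ (s : ℂ) (hs : s ∈ D),
      ((Units.oneSub (-(s • t)) (hmem s hs) : Aˣ) : A) = 1 + ∑ j, b j * (s • u j) := by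
    intro s hs
    have : ∑ j, b j * (s • u j) = s • t := by
      rw [ht, Finset.smul_sum]
      exact Finset.sum_congr rfl fun k _ => (mul_smul_comm s (b k) (u k))
    rw [this]
    show 1 - -(s • t) = 1 + s • t
    rw [sub_neg_eq_add]
  set f : D → (Matrix (Fin n) (Fin n) A)ˣ :=
    fun s => elemUnit (fun i => s.1 • u i) b (Units.oneSub (-(s.1 • t)) (hmem s.1 s.2))
      (hval s.1 s.2) with hf
  -- continuity of f
  have hinv_eq : ∀ s : D, ((Units.oneSub (-(s.1 • t)) (hmem s.1 s.2))⁻¹ : Aˣ).1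
      = Ring.inverse ((1 : A) + s.1 • t) := by
    intro s
    rw [← sub_neg_eq_add, ← Units.val_oneSub (-(s.1 • t)) (hmem s.1 s.2), Ring.inverse_unit]
  have hcont : Continuous f := by
    rw [Units.continuous_iff]
    constructor
    · show Continuous fun s : D =>
        (1 + Matrix.of fun i j => (s.1 • u i) * b j : Matrix (Fin n) (Fin n) A)
      refine continuous_const.add ?_
      exact continuous_matrix fun i j =>
        (continuous_subtype_val.smul continuous_const).mul continuous_const
    · have : (fun s : D => ((f s)⁻¹ : (Matrix (Fin n) (Fin n) A)ˣ).1)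
          = fun s : D => (1 - Matrix.of fun i j =>
              (s.1 • u i) * (Ring.inverse ((1 : A) + s.1 • t) * b j)
            : Matrix (Fin n) (Fin n) A) := by
        funext s
        show (1 - Matrix.of fun i j =>
            (s.1 • u i) * (((Units.oneSub (-(s.1 • t)) (hmem s.1 s.2))⁻¹ : Aˣ).1 * b j)
          : Matrix (Fin n) (Fin n) A) = _
        rw [hinv_eq s]
      rw [this]
      refine continuous_const.sub ?_
      refine continuous_matrix fun i j => ?_
      refine ((continuous_subtype_val.smul continuous_const).mul (Continuous.mul ?_ continuous_const))
      -- continuity of s ↦ Ring.inverse (1 + s • t)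
      rw [continuous_iff_continuousAt]
      intro s
      have h1 : ContinuousAt (fun s : D => (1 : A) + s.1 • t) s :=
        (continuous_const.add (continuous_subtype_val.smul continuous_const)).continuousAt
      have h2 : ContinuousAt Ring.inverse ((fun s : D => (1 : A) + s.1 • t) s) := by
        show ContinuousAt Ring.inverse ((1 : A) + s.1 • t)
        rw [← sub_neg_eq_add, ← Units.val_oneSub (-(s.1 • t)) (hmem s.1 s.2)]
        exact NormedRing.inverse_continuousAt _
      show ContinuousAt (Ring.inverse ∘ fun s : D => (1 : A) + s.1 • t) s
      exact ContinuousAt.comp (f := fun s : D => (1 : A) + s.1 • t) (g := Ring.inverse) h2 h1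
  have h0 : (0 : ℂ) ∈ D := by simp [hDdef]
  have h1 : (1 : ℂ) ∈ D := by simpa [hDdef] using h
  have hDconv : Convex ℝ D := by
    intro x hx y hy a c ha hc hac
    simp only [hDdef, Set.mem_setOf_eq] at hx hy ⊢
    have hax : ‖a • x + c • y‖ ≤ a * ‖x‖ + c * ‖y‖ := by
      refine (norm_add_le _ _).trans ?_
      rw [norm_smul, norm_smul, Real.norm_eq_abs, Real.norm_eq_abs, abs_of_nonneg ha,
        abs_of_nonneg hc]
    rcases eq_or_lt_of_le ha with h|h
    · have hc1 : c = 1 := by linarith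
      subst hc1
      rw [← h, zero_smul, one_smul, zero_add]
      exact hy
    · have k1 : a * (‖x‖ * ‖t‖) < a * 1 := by exact mul_lt_mul_of_pos_left hx h
      have k2 : c * (‖y‖ * ‖t‖) ≤ c * 1 := mul_le_mul_of_nonneg_left hy.le hc
      nlinarith [mul_le_mul_of_nonneg_right hax (norm_nonneg t)]
  haveI : PreconnectedSpace D := Subtype.preconnectedSpace hDconv.isPreconnected
  have hrange : IsPreconnected (Set.range f) := isPreconnected_range hcont
  have hone : (1 : (Matrix (Fin n) (Fin n) A)ˣ) ∈ Set.range f := by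
    refine ⟨⟨0, h0⟩, ?_⟩
    apply Units.ext
    show (1 + Matrix.of fun i j => ((0 : ℂ) • u i) * b j : Matrix (Fin n) (Fin n) A) = 1
    have : (Matrix.of fun i j => ((0 : ℂ) • u i) * b j : Matrix (Fin n) (Fin n) A) = 0 := by
      ext i j; simp
    rw [this, add_zero]
  have hTmem : T ∈ Set.range f := by
    refine ⟨⟨1, h1⟩, ?_⟩
    apply Units.ext
    show (1 + Matrix.of fun i j => ((1 : ℂ) • u i) * b j : Matrix (Fin n) (Fin n) A) = T.1
    rw [hT]
    simp
  exact hrange.subset_connectedComponent hone hTmem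

/-- the orbit of `v` under `GL_n^0`. -/
def orbitSet (v : Fin n → A) : Set (Fin n → A) :=
  {w | ∃ T : (Matrix (Fin n) (Fin n) A)ˣ,
    T ∈ connectedComponent (1 : (Matrix (Fin n) (Fin n) A)ˣ) ∧ T.val.mulVec v = w}

lemma self_mem_orbitSet (v : Fin n → A) : v ∈ orbitSet v :=
  ⟨1, mem_connectedComponent, Matrix.one_mulVec v⟩

lemma isLeftUnimodular_mulVec (T : (Matrix (Fin n) (Fin n) A)ˣ) {v : Fin n → A}
    (hv : IsLeftUnimodular v) : IsLeftUnimodular (T.val.mulVec v) := by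
  obtain ⟨b, hb⟩ := hv
  refine ⟨Matrix.vecMul b (T⁻¹ : (Matrix (Fin n) (Fin n) A)ˣ).val, ?_⟩
  have : ∑ i, Matrix.vecMul b (T⁻¹ : (Matrix (Fin n) (Fin n) A)ˣ).val i * T.val.mulVec v i
      = Matrix.vecMul b (T⁻¹ : (Matrix (Fin n) (Fin n) A)ˣ).val ⬝ᵥ (T.val *ᵥ v) := rfl
  rw [this, Matrix.dotProduct_mulVec, Matrix.vecMul_vecMul, Units.inv_mul, Matrix.vecMul_one]
  exact hb

lemma isLeftUnimodular_of_mem_orbitSet {v w : Fin n → A} (hv : IsLeftUnimodular v)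
    (hw : w ∈ orbitSet v) : IsLeftUnimodular w := by
  obtain ⟨T, -, rfl⟩ := hw
  exact isLeftUnimodular_mulVec T hv

lemma mem_orbitSet_trans {v w x : Fin n → A} (h1 : w ∈ orbitSet v) (h2 : x ∈ orbitSet w) :
    x ∈ orbitSet v := by
  obtain ⟨T₁, hc₁, rfl⟩ := h1
  obtain ⟨T₂, hc₂, rfl⟩ := h2
  exact ⟨T₂ * T₁, mul_mem_connectedComponent_one hc₂ hc₁,
    by rw [Units.val_mul, ← Matrix.mulVec_mulVec]⟩

lemma mem_orbitSet_symm {v w : Fin n → A} (h : w ∈ orbitSet v) : v ∈ orbitSet w := by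
  obtain ⟨T, hc, rfl⟩ := h
  refine ⟨T⁻¹, inv_mem_connectedComponent_one hc, ?_⟩
  rw [Matrix.mulVec_mulVec, Units.inv_mul, Matrix.one_mulVec]

lemma orbitSet_isOpen (v : Fin n → A) (hv : IsLeftUnimodular v) : IsOpen (orbitSet v) := by
  rw [isOpen_iff_forall_mem_open]
  intro w hworb
  have hw : IsLeftUnimodular w := isLeftUnimodular_of_mem_orbitSet hv hworb
  obtain ⟨b, hb⟩ := hw
  refine ⟨{w' | ‖∑ j, b j * (w' j - w j)‖ < 1}, ?_, ?_, by simp⟩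
  · intro w' hw'
    simp only [Set.mem_setOf_eq] at hw'
    set u : Fin n → A := fun j => w' j - w j with hu
    have he : ((Units.oneSub (-(∑ j, b j * u j)) (by rwa [norm_neg]) : Aˣ) : A)
        = 1 + ∑ j, b j * u j := by
      show 1 - -(∑ j, b j * u j) = 1 + ∑ j, b j * u j
      rw [sub_neg_eq_add]
    set T' := elemUnit u b _ he with hT'
    have hT'c : T' ∈ connectedComponent (1 : (Matrix (Fin n) (Fin n) A)ˣ) :=
      elemUnit_mem_component u b hw' T' rfl
    have hvec : T'.val *ᵥ w = w' := by
      show (1 + Matrix.of fun i j => u i * b j) *ᵥ w = w'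
      funext i
      rw [Matrix.add_mulVec, Matrix.one_mulVec]
      show w i + ∑ j, u i * b j * w j = w' i
      have hsum : ∑ j, u i * b j * w j = u i * ∑ j, b j * w j := by
        rw [Finset.mul_sum]
        exact Finset.sum_congr rfl fun k _ => by rw [mul_assoc]
      rw [hsum, hb, mul_one, hu]
      simp
    exact mem_orbitSet_trans hworb ⟨T', hT'c, hvec⟩
  · have hcont : Continuous fun w' : Fin n → A => ∑ j, b j * (w' j - w j) :=
      continuous_finset_sum _ fun j _ =>
        continuous_const.mul ((continuous_apply j).sub continuous_const)
    have : {w' : Fin n → A | ‖∑ j, b j * (w' j - w j)‖ < 1}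
        = (fun w' : Fin n → A => ∑ j, b j * (w' j - w j)) ⁻¹' Metric.ball 0 1 := by
      ext w'
      simp [Metric.mem_ball, dist_zero_right]
    rw [this]
    exact hcont.isOpen_preimage _ Metric.isOpen_ball

lemma orbitSet_preimage_clopen (v : Fin n → A) (hv : IsLeftUnimodular v) :
    IsOpen (Subtype.val ⁻¹' orbitSet v : Set {w : Fin n → A // IsLeftUnimodular w}) ∧
    IsClosed (Subtype.val ⁻¹' orbitSet v : Set {w : Fin n → A // IsLeftUnimodular w}) := by
  refine ⟨(orbitSet_isOpen v hv).preimage continuous_subtype_val, ?_⟩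
  rw [← isOpen_compl_iff, isOpen_iff_forall_mem_open]
  rintro ⟨w, hw⟩ hmem
  refine ⟨Subtype.val ⁻¹' orbitSet w, ?_,
    (orbitSet_isOpen w hw).preimage continuous_subtype_val, self_mem_orbitSet w⟩
  rintro ⟨x, hx⟩ hxw hxv
  have h1 : x ∈ orbitSet w := hxw
  have h2 : x ∈ orbitSet v := hxv
  exact hmem (mem_orbitSet_trans h2 (mem_orbitSet_symm h1))

lemma connected_implies_transitive
    (hconn : IsConnected {w : Fin n → A | IsLeftUnimodular w}) :
    GLZeroActsTransitively A n := by
  intro v w hv hw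
  haveI : PreconnectedSpace {w : Fin n → A // IsLeftUnimodular w} :=
    (isConnected_iff_connectedSpace.mp hconn).toPreconnectedSpace
  have hcl := orbitSet_preimage_clopen v hv
  have huniv : (Subtype.val ⁻¹' orbitSet v :
      Set {w : Fin n → A // IsLeftUnimodular w}) = Set.univ :=
    IsClopen.eq_univ ⟨hcl.2, hcl.1⟩ ⟨⟨v, hv⟩, self_mem_orbitSet v⟩
  have : (⟨w, hw⟩ : {w : Fin n → A // IsLeftUnimodular w}) ∈
      (Subtype.val ⁻¹' orbitSet v : Set {w : Fin n → A // IsLeftUnimodular w}) := by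
    rw [huniv]; trivial
  exact this

end Aux

/-- For a unital C*-algebra `A`, `n ≥ 1` and `v ∈ Lg_n(A)`, the orbit
`GL_n^0(A)·v` is both open and closed in `Lg_n(A)` (subspace topology from `Aⁿ`).
Consequently connectedness of `Lg_n(A)` implies transitivity of the `GL_n^0(A)`-action. -/
theorem stmt_14 {A : Type*} [NormedRing A] [StarRing A] [CStarRing A]
    [NormedAlgebra ℂ A] [CompleteSpace A] [StarModule ℂ A]
    {n : ℕ} (hn : 1 ≤ n) (v : Fin n → A) (hv : IsLeftUnimodular v)
    (O : Set (Fin n → A))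
    (hO : O = {w | ∃ T : (Matrix (Fin n) (Fin n) A)ˣ,
      T ∈ connectedComponent (1 : (Matrix (Fin n) (Fin n) A)ˣ) ∧ T.val.mulVec v = w}) :
    IsOpen (Subtype.val ⁻¹' O : Set {w : Fin n → A // IsLeftUnimodular w}) ∧
      IsClosed (Subtype.val ⁻¹' O : Set {w : Fin n → A // IsLeftUnimodular w}) ∧
      (IsConnected {w : Fin n → A | IsLeftUnimodular w} →
        GLZeroActsTransitively A n) := by
  have hO' : O = orbitSet v := hO
  subst hO'
  exact ⟨(orbitSet_preimage_clopen v hv).1, (orbitSet_preimage_clopen v hv).2,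
    fun hconn => connected_implies_transitive hconn⟩
end

section
/- Let $\alpha : G \to \mathrm{Aut}(A)$ be an action of a finite group $G$ on a unital, separable C*-algebra $A$ with the Rokhlin property: for every finite $F \subset A$ and $\epsilon > 0$ there are mutually orthogonal projections $\{e_g\}_{g \in G}$ in $A$ with $\alpha_g(e_h) = e_{gh}$, $\|e_g a - a e_g\| < \epsilon$ for all $a \in F$, and $\sum_g e_g = 1$. Suppose also there are unital linear contractions $\psi_j : A \to A^\alpha$ that are asymptotically multiplicative and asymptotically the identity on $A^\alpha$ (Gardella). Then $csr(A^\alpha) \leq csr(A)$ and $gsr(A^\alpha) \leq gsr(A)$. -/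
/-- The connected stable rank. -/
noncomputable def csr (A : Type*) [Ring A] [TopologicalSpace A] : ℕ∞ :=
  sInf {n : ℕ∞ | 1 ≤ n ∧ ∀ m : ℕ, n ≤ (m : ℕ∞) → GLZeroActsTransitively A m}

/-- The Rokhlin property for an action of a finite group `G` on a unital C*-algebra `A`:
for every finite `F ⊆ A` and `ε > 0` there are mutually orthogonal projections
`{e_g}_{g ∈ G}` with `α_g (e_h) = e_{gh}`, `‖e_g a - a e_g‖ < ε` for `a ∈ F`, and
`∑ e_g = 1`. -/
def RokhlinProperty {A : Type*} [NormedRing A] [StarRing A] [NormedAlgebra ℂ A]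
    {G : Type*} [Group G] [Fintype G] (α : G →* (A ≃ₐ[ℂ] A)) : Prop :=
  ∀ (F : Finset A) (ε : ℝ), 0 < ε →
    ∃ e : G → A,
      (∀ g, star (e g) = e g ∧ e g * e g = e g) ∧
      (∀ g h, g ≠ h → e g * e h = 0) ∧
      (∀ g h, α g (e h) = e (g * h)) ∧
      (∀ g, ∀ a ∈ F, ‖e g * a - a * e g‖ < ε) ∧
      ∑ g : G, e g = 1



open Filter Topology

section BanachUnits

variable {B : Type*} [NormedRing B] [CompleteSpace B]

lemma aux_inv_norm_le [NormOneClass B] {u : Bˣ} {r : ℝ}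
    (hr : r < 1) (h : ‖1 - (u : B)‖ ≤ r) : ‖((u⁻¹ : Bˣ) : B)‖ ≤ (1 - r)⁻¹ := by
  have key : ((u⁻¹ : Bˣ) : B) = 1 + ((u⁻¹ : Bˣ) : B) * (1 - (u : B)) := by
    rw [mul_sub, mul_one, Units.inv_mul]; abel
  have h2 : ‖((u⁻¹ : Bˣ) : B)‖ ≤ 1 + ‖((u⁻¹ : Bˣ) : B)‖ * r := by
    calc ‖((u⁻¹ : Bˣ) : B)‖ = ‖1 + ((u⁻¹ : Bˣ) : B) * (1 - (u : B))‖ := by rw [← key]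
    _ ≤ ‖(1 : B)‖ + ‖((u⁻¹ : Bˣ) : B) * (1 - (u : B))‖ := norm_add_le _ _
    _ ≤ 1 + ‖((u⁻¹ : Bˣ) : B)‖ * r := by
        rw [norm_one]
        have h3 := norm_mul_le ((u⁻¹ : Bˣ) : B) (1 - (u : B))
        nlinarith [norm_nonneg ((u⁻¹ : Bˣ) : B), norm_nonneg (1 - (u : B))]
  have hpos : (0:ℝ) < 1 - r := by linarith
  have hx : ‖((u⁻¹ : Bˣ) : B)‖ * (1 - r) ≤ 1 := by nlinarith
  calc ‖((u⁻¹ : Bˣ) : B)‖ = ‖((u⁻¹ : Bˣ) : B)‖ * (1 - r) * (1 - r)⁻¹ := by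
        field_simp
  _ ≤ 1 * (1 - r)⁻¹ := by
        have : (0:ℝ) ≤ (1 - r)⁻¹ := by positivity
        exact mul_le_mul_of_nonneg_right hx this
  _ = (1 - r)⁻¹ := one_mul _

lemma aux_mem_connectedComponent_one [NormedSpace ℝ B] (u : Bˣ)
    (h : ‖(u : B) - 1‖ < 1) : u ∈ connectedComponent (1 : Bˣ) := by
  set t : B := 1 - (u : B) with ht
  have htn : ‖t‖ < 1 := by rwa [ht, norm_sub_rev]
  have hb : ∀ s : unitInterval, ‖(s : ℝ) • t‖ < 1 := by
    intro s
    rw [norm_smul, Real.norm_eq_abs, abs_of_nonneg s.2.1]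
    calc (s : ℝ) * ‖t‖ ≤ 1 * ‖t‖ := by gcongr; exact s.2.2
    _ < 1 := by rwa [one_mul]
  let f : unitInterval → Bˣ := fun s => Units.oneSub ((s : ℝ) • t) (hb s)
  have hval : ∀ s, ((f s : Bˣ) : B) = 1 - (s : ℝ) • t := fun s => rfl
  have hinner : Continuous fun s : unitInterval => (1 : B) - (s : ℝ) • t :=
    continuous_const.sub (continuous_subtype_val.smul continuous_const)
  have hcont : Continuous f := by
    apply Units.continuous_iff.2
    constructor
    · show Continuous fun s : unitInterval => ((f s : Bˣ) : B)
      simpa only [hval] using hinner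
    · have heq : (fun s : unitInterval => (((f s)⁻¹ : Bˣ) : B)) =
          fun s : unitInterval => Ring.inverse ((1 : B) - (s : ℝ) • t) := by
        funext s
        rw [← Ring.inverse_unit (f s)]
        rfl
      rw [heq]
      refine continuous_iff_continuousAt.2 fun s => ?_
      have h1 : ContinuousAt Ring.inverse ((1 : B) - (s : ℝ) • t) :=
        NormedRing.inverse_continuousAt (f s)
      exact ContinuousAt.comp (g := Ring.inverse) h1 hinner.continuousAt
  let p : Path (1 : Bˣ) u :=
    { toFun := f
      continuous_toFun := hcont
      source' := by apply Units.ext; rw [hval]; simp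
      target' := by apply Units.ext; rw [hval]; simp [ht] }
  exact pathComponent_subset_component _ ⟨p⟩

lemma aux_isUnit_of_approx_inverse {s a : B} (h1 : ‖1 - a * s‖ < 1) (h2 : ‖1 - s * a‖ < 1) :
    IsUnit s := by
  obtain ⟨u1, hu1⟩ : IsUnit (a * s) := by
    simpa using isUnit_one_sub_of_norm_lt_one h1
  obtain ⟨u2, hu2⟩ : IsUnit (s * a) := by
    simpa using isUnit_one_sub_of_norm_lt_one h2
  have hl : ((↑u1⁻¹ : B) * a) * s = 1 := by rw [mul_assoc, ← hu1]; exact u1.inv_mul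
  have hr : s * (a * (↑u2⁻¹ : B)) = 1 := by rw [← mul_assoc, ← hu2]; exact u2.mul_inv
  have hxy : (↑u1⁻¹ : B) * a = a * (↑u2⁻¹ : B) := by
    calc (↑u1⁻¹ : B) * a = ((↑u1⁻¹ : B) * a) * (s * (a * (↑u2⁻¹ : B))) := by rw [hr, mul_one]
    _ = (((↑u1⁻¹ : B) * a) * s) * (a * (↑u2⁻¹ : B)) := (mul_assoc _ s _).symm
    _ = a * (↑u2⁻¹ : B) := by rw [hl, one_mul]
  exact ⟨⟨s, a * (↑u2⁻¹ : B), hr, by rw [← hxy]; exact hl⟩, rfl⟩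

lemma aux_mem_closure_ball (T : Bˣ) (hT : T ∈ connectedComponent (1 : Bˣ)) :
    T ∈ Subgroup.closure {u : Bˣ | ‖(u : B) - 1‖ < 1} := by
  set H := Subgroup.closure {u : Bˣ | ‖(u : B) - 1‖ < 1} with hH
  have hV : IsOpen {u : Bˣ | ‖(u : B) - 1‖ < 1} := by
    have : {u : Bˣ | ‖(u : B) - 1‖ < 1} = Units.val ⁻¹' (Metric.ball (1 : B) 1) := by
      ext u; simp [Metric.mem_ball, dist_eq_norm]
    rw [this]; exact Metric.isOpen_ball.preimage Units.continuous_val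
  have hmem : (1 : Bˣ) ∈ {u : Bˣ | ‖(u : B) - 1‖ < 1} := by
    simp [Set.mem_setOf_eq]
  have hopen : IsOpen (H : Set Bˣ) := Subgroup.isOpen_of_mem_nhds H
    (Filter.mem_of_superset (hV.mem_nhds hmem) fun u hu => Subgroup.subset_closure hu)
  have hclosed := H.isClosed_of_isOpen hopen
  exact (IsClopen.connectedComponent_subset ⟨hclosed, hopen⟩ H.one_mem) hT

end BanachUnits

open Filter Topology Finset
open scoped NNReal

section MatrixNorm

open scoped Matrix
attribute [local instance] Matrix.linftyOpNormedAddCommGroup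

variable {m : ℕ} {β γ : Type*} [NormedRing β] [NormedRing γ]

lemma aux_entry_norm_le (X : Matrix (Fin m) (Fin m) β) (i k : Fin m) : ‖X i k‖ ≤ ‖X‖ := by
  have h : ‖X i k‖₊ ≤ ‖X‖₊ := by
    rw [Matrix.linfty_opNNNorm_def]
    exact le_trans (Finset.single_le_sum (f := fun k => ‖X i k‖₊) (fun _ _ => zero_le)
      (Finset.mem_univ k)) (Finset.le_sup (f := fun i => ∑ j, ‖X i j‖₊) (Finset.mem_univ i))
  exact_mod_cast h

lemma aux_norm_le_sum (X : Matrix (Fin m) (Fin m) β) : ‖X‖ ≤ ∑ i, ∑ k, ‖X i k‖ := by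
  have h : ‖X‖₊ ≤ ∑ i, ∑ k, ‖X i k‖₊ := by
    rw [Matrix.linfty_opNNNorm_def]
    exact Finset.sup_le fun i _ => Finset.single_le_sum
      (f := fun i => ∑ k, ‖X i k‖₊) (fun _ _ => zero_le) (Finset.mem_univ i)
  calc ‖X‖ = ((‖X‖₊ : ℝ≥0) : ℝ) := rfl
  _ ≤ (((∑ i, ∑ k, ‖X i k‖₊ : ℝ≥0)) : ℝ) := by exact_mod_cast h
  _ = ∑ i, ∑ k, ‖X i k‖ := by push_cast; rfl

lemma aux_norm_le_of_entry (X : Matrix (Fin m) (Fin m) β) (Y : Matrix (Fin m) (Fin m) γ)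
    (h : ∀ i k, ‖X i k‖ ≤ ‖Y i k‖) : ‖X‖ ≤ ‖Y‖ := by
  have h' : ‖X‖₊ ≤ ‖Y‖₊ := by
    rw [Matrix.linfty_opNNNorm_def, Matrix.linfty_opNNNorm_def]
    exact Finset.sup_mono_fun fun i _ => Finset.sum_le_sum fun k _ =>
      NNReal.coe_le_coe.mp (h i k)
  exact_mod_cast h'

end MatrixNorm

open Filter Topology

section Approx

variable {A : Type*} [NormedRing A] [NormedAlgebra ℂ A] (ψ : ℕ → A →ₗ[ℂ] A)

/-- `x j` asymptotically agrees with `ψ j a`. -/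
def ApproxSeq (x : ℕ → A) (a : A) : Prop :=
  Tendsto (fun j => ‖x j - ψ j a‖) atTop (𝓝 0)

lemma approxSeq_psi (a : A) : ApproxSeq ψ (fun j => ψ j a) a := by
  simpa [ApproxSeq] using tendsto_const_nhds

lemma approxSeq_zero : ApproxSeq ψ (fun _ => 0) 0 := by
  simpa [ApproxSeq] using tendsto_const_nhds

lemma approxSeq_add {x y : ℕ → A} {a b : A} (hx : ApproxSeq ψ x a) (hy : ApproxSeq ψ y b) :
    ApproxSeq ψ (fun j => x j + y j) (a + b) := by
  refine squeeze_zero (fun j => norm_nonneg _) (fun j => ?_)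
    (by simpa using Filter.Tendsto.add hx hy)
  calc ‖x j + y j - ψ j (a + b)‖ = ‖(x j - ψ j a) + (y j - ψ j b)‖ := by
        rw [map_add]; congr 1; abel
  _ ≤ ‖x j - ψ j a‖ + ‖y j - ψ j b‖ := norm_add_le _ _

lemma approxSeq_sum {ι : Type*} (s : Finset ι) (x : ι → ℕ → A) (a : ι → A)
    (h : ∀ i ∈ s, ApproxSeq ψ (x i) (a i)) :
    ApproxSeq ψ (fun j => ∑ i ∈ s, x i j) (∑ i ∈ s, a i) := by
  classical
  induction s using Finset.induction_on with
  | empty => simpa using approxSeq_zero ψ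
  | insert c s' hni ih =>
      simp only [Finset.sum_insert hni]
      exact approxSeq_add ψ (h c (Finset.mem_insert_self c s'))
        (ih fun i hi => h i (Finset.mem_insert_of_mem hi))

lemma approxSeq_mul (hψcontr : ∀ j a, ‖ψ j a‖ ≤ ‖a‖)
    (hψmul : ∀ a b : A, Tendsto (fun j => ‖ψ j (a * b) - ψ j a * ψ j b‖) atTop (𝓝 0))
    {x y : ℕ → A} {a b : A} (hx : ApproxSeq ψ x a) (hy : ApproxSeq ψ y b) :
    ApproxSeq ψ (fun j => x j * y j) (a * b) := by
  have key : ∀ j, ‖x j * y j - ψ j (a * b)‖ ≤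
      ‖x j - ψ j a‖ * (‖y j - ψ j b‖ + ‖b‖) + ‖a‖ * ‖y j - ψ j b‖
        + ‖ψ j (a * b) - ψ j a * ψ j b‖ := by
    intro j
    have hdecomp : x j * y j - ψ j (a * b) =
        (x j - ψ j a) * y j + ψ j a * (y j - ψ j b) - (ψ j (a * b) - ψ j a * ψ j b) := by
      noncomm_ring
    rw [hdecomp]
    refine le_trans (norm_sub_le _ _) ?_
    gcongr
    refine le_trans (norm_add_le _ _) ?_
    gcongr
    · calc ‖(x j - ψ j a) * y j‖ ≤ ‖x j - ψ j a‖ * ‖y j‖ := norm_mul_le _ _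
      _ ≤ ‖x j - ψ j a‖ * (‖y j - ψ j b‖ + ‖b‖) := by
          gcongr
          calc ‖y j‖ = ‖(y j - ψ j b) + ψ j b‖ := by congr 1; abel
          _ ≤ ‖y j - ψ j b‖ + ‖ψ j b‖ := norm_add_le _ _
          _ ≤ ‖y j - ψ j b‖ + ‖b‖ := by gcongr; exact hψcontr j b
    · calc ‖ψ j a * (y j - ψ j b)‖ ≤ ‖ψ j a‖ * ‖y j - ψ j b‖ := norm_mul_le _ _
      _ ≤ ‖a‖ * ‖y j - ψ j b‖ := by gcongr; exact hψcontr j a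
  have hlim : Tendsto (fun j => ‖x j - ψ j a‖ * (‖y j - ψ j b‖ + ‖b‖) + ‖a‖ * ‖y j - ψ j b‖
      + ‖ψ j (a * b) - ψ j a * ψ j b‖) atTop (𝓝 0) := by
    have h1 : Tendsto (fun j => ‖y j - ψ j b‖ + ‖b‖) atTop (𝓝 (0 + ‖b‖)) :=
      Filter.Tendsto.add hy tendsto_const_nhds
    have h2 := Filter.Tendsto.mul hx h1
    have h3 := Filter.Tendsto.mul (tendsto_const_nhds (x := ‖a‖)) hy
    have := Filter.Tendsto.add (Filter.Tendsto.add h2 h3) (hψmul a b)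
    simpa using this
  exact squeeze_zero (fun j => norm_nonneg _) key hlim

lemma approxSeq_tendsto {x : ℕ → A} {a : A} (hx : ApproxSeq ψ x a)
    (ha : Tendsto (fun j => ‖ψ j a - a‖) atTop (𝓝 0)) :
    Tendsto (fun j => ‖x j - a‖) atTop (𝓝 0) := by
  refine squeeze_zero (fun j => norm_nonneg _) (fun j => ?_)
    (by simpa using Filter.Tendsto.add hx ha)
  calc ‖x j - a‖ = ‖(x j - ψ j a) + (ψ j a - a)‖ := by congr 1; abel
  _ ≤ ‖x j - ψ j a‖ + ‖ψ j a - a‖ := norm_add_le _ _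

end Approx

section Corrector

open scoped Matrix
attribute [local instance] Matrix.linftyOpNormedRing Matrix.linftyOpNormedAlgebra
  Matrix.linftyOpNormedAddCommGroup Matrix.linftyOpNormedSpace

variable {S : Type*} [NormedRing S] [CompleteSpace S] [NormOneClass S] [NormedSpace ℝ S]

lemma aux_norm_le_of_rows {m : ℕ} (X : Matrix (Fin m) (Fin m) S) {C : ℝ} (h0 : 0 ≤ C)
    (h : ∀ i, ∑ k, ‖X i k‖ ≤ C) : ‖X‖ ≤ C := by
  rw [Matrix.linfty_opNorm_def]
  rw [show C = ((⟨C, h0⟩ : NNReal) : ℝ) from rfl]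
  refine NNReal.coe_le_coe.mpr (Finset.sup_le fun i _ => ?_)
  exact NNReal.coe_le_coe.mp (by show _ ≤ C; simpa using h i)

lemma aux_corrector {m : ℕ} (w wj b : Fin m → S) (hb : ∑ i, b i * w i = 1)
    (hclose : ∀ i, ‖wj i - w i‖ < 1 / (2 * ((∑ k, ‖b k‖) + 1))) :
    ∃ E : (Matrix (Fin m) (Fin m) S)ˣ,
      E ∈ connectedComponent (1 : (Matrix (Fin m) (Fin m) S)ˣ) ∧ E.val.mulVec wj = w := by
  classical
  haveI : @CompleteSpace (Matrix (Fin m) (Fin m) S) PseudoMetricSpace.toUniformSpace :=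
    Matrix.instCompleteSpace _ _ _
  set β : ℝ := ∑ k, ‖b k‖ with hβ
  have hβ0 : 0 ≤ β := Finset.sum_nonneg fun _ _ => norm_nonneg _
  set ε : ℝ := 1 / (2 * (β + 1)) with hε
  have hε0 : 0 < ε := by positivity
  -- the element d
  set d : S := ∑ i, b i * wj i with hd
  have hd1 : ‖1 - d‖ ≤ β * ε := by
    have h1 : (1 : S) - d = ∑ i, b i * (w i - wj i) := by
      rw [← hb, hd, ← Finset.sum_sub_distrib]
      congr 1; funext i; rw [mul_sub]
    rw [h1]
    refine le_trans (norm_sum_le _ _) ?_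
    rw [hβ, Finset.sum_mul]
    refine Finset.sum_le_sum fun i _ => ?_
    refine le_trans (norm_mul_le _ _) ?_
    have h' : ‖w i - wj i‖ ≤ ε := by rw [norm_sub_rev]; exact (hclose i).le
    exact mul_le_mul_of_nonneg_left h' (norm_nonneg _)
  have hβε : β * ε ≤ 1 / 2 := by
    rw [hε, mul_one_div, div_le_div_iff₀ (by positivity) (by norm_num)]
    nlinarith
  have hd2 : ‖1 - d‖ < 1 := lt_of_le_of_lt (le_trans hd1 hβε) (by norm_num)
  set du : Sˣ := Units.oneSub (1 - d) hd2 with hdu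
  have hduval : (du : S) = d := sub_sub_cancel 1 d
  have hduinv : ‖((du⁻¹ : Sˣ) : S)‖ ≤ 2 := by
    have h := aux_inv_norm_le (u := du) (r := 1/2) (by norm_num)
      (by rw [hduval]; exact le_trans hd1 hβε)
    refine le_trans h (by norm_num)
  set c : Fin m → S := fun k => ((du⁻¹ : Sˣ) : S) * b k with hc
  have hcsum : ∑ k, c k * wj k = 1 := by
    have : ∑ k, c k * wj k = ((du⁻¹ : Sˣ) : S) * ∑ k, b k * wj k := by
      rw [Finset.mul_sum]
      congr 1; funext k; rw [hc, mul_assoc]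
    rw [this, ← hd, ← hduval, Units.inv_mul]
  -- the correcting matrix
  set X : Matrix (Fin m) (Fin m) S := Matrix.of (fun i k => (w i - wj i) * c k) with hX
  have hXnorm : ‖X‖ < 1 := by
    have hrow : ∀ i, ∑ k, ‖X i k‖ ≤ ε * (2 * β) := by
      intro i
      have : ∀ k, ‖X i k‖ ≤ ε * (2 * ‖b k‖) := by
        intro k
        refine le_trans (norm_mul_le _ _) ?_
        have h1 : ‖w i - wj i‖ ≤ ε := by
          rw [norm_sub_rev]; exact le_of_lt (hclose i)
        have h2 : ‖c k‖ ≤ 2 * ‖b k‖ := by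
          refine le_trans (norm_mul_le _ _) ?_
          exact mul_le_mul_of_nonneg_right hduinv (norm_nonneg _)
        exact mul_le_mul h1 h2 (norm_nonneg _) hε0.le
      refine le_trans (Finset.sum_le_sum fun k _ => this k) ?_
      rw [← Finset.mul_sum, ← Finset.mul_sum]
    have hXle : ‖X‖ ≤ ε * (2 * β) := aux_norm_le_of_rows X (by positivity) hrow
    refine lt_of_le_of_lt hXle ?_
    rw [hε]
    rw [div_mul_eq_mul_div, one_mul, div_lt_iff₀ (by positivity)]
    nlinarith
  set E : (Matrix (Fin m) (Fin m) S)ˣ := Units.oneSub (-X) (by rwa [norm_neg]) with hE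
  have hEval : E.val = 1 + X := by
    show (1 : Matrix (Fin m) (Fin m) S) - (-X) = 1 + X
    rw [sub_neg_eq_add]
  refine ⟨E, ?_, ?_⟩
  · refine aux_mem_connectedComponent_one E ?_
    rw [hEval, add_sub_cancel_left]
    exact hXnorm
  · rw [hEval]
    funext i
    rw [Matrix.add_mulVec, Matrix.one_mulVec]
    have hXv : X.mulVec wj i = (w i - wj i) * ∑ k, c k * wj k := by
      simp only [Matrix.mulVec, dotProduct, Finset.mul_sum]
      congr 1; funext k
      rw [hX]
      show (w i - wj i) * c k * wj k = (w i - wj i) * (c k * wj k)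
      rw [mul_assoc]
    show wj i + X.mulVec wj i = w i
    rw [hXv, hcsum, mul_one]
    abel

end Corrector

section Transfer

open scoped Matrix
attribute [local instance] Matrix.linftyOpNormedRing Matrix.linftyOpNormedAlgebra
  Matrix.linftyOpNormedAddCommGroup Matrix.linftyOpNormedSpace

variable {A : Type*} [NormedRing A] [NormedAlgebra ℂ A] [CompleteSpace A] [NormOneClass A]
  {R : Subalgebra ℂ A} {ψ : ℕ → A →ₗ[ℂ] A}

lemma aux_coe_norm (x : R) : ‖(x : A)‖ = ‖x‖ := rfl

lemma aux_normOneClass : NormOneClass R :=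
  ⟨by rw [← aux_coe_norm]; simp⟩

/-- entrywise application of `ψ j`, landing in `R`. -/
noncomputable def psiMat (ψ : ℕ → A →ₗ[ℂ] A) (hψfix : ∀ j a, ψ j a ∈ R) {m : ℕ} (j : ℕ)
    (Y : Matrix (Fin m) (Fin m) A) : Matrix (Fin m) (Fin m) R :=
  Matrix.of fun i k => (⟨ψ j (Y i k), hψfix j _⟩ : R)

lemma psiMat_coe (hψfix : ∀ j a, ψ j a ∈ R) {m : ℕ} (j : ℕ)
    (Y : Matrix (Fin m) (Fin m) A) (i k : Fin m) :
    ((psiMat ψ hψfix j Y i k : R) : A) = ψ j (Y i k) := rfl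

lemma aux_coe_one_entry {m : ℕ} (i k : Fin m) :
    (((1 : Matrix (Fin m) (Fin m) R) i k : R) : A) = (1 : Matrix (Fin m) (Fin m) A) i k := by
  by_cases h : i = k <;> simp [Matrix.one_apply, h]

lemma aux_psi_one_entry (hψone : ∀ j, ψ j 1 = 1) {m : ℕ} (j : ℕ) (i k : Fin m) :
    ψ j ((1 : Matrix (Fin m) (Fin m) A) i k) = (1 : Matrix (Fin m) (Fin m) A) i k := by
  by_cases h : i = k <;> simp [Matrix.one_apply, h, hψone j]

lemma aux_coe_mul_entry {m : ℕ} (X Y : Matrix (Fin m) (Fin m) R) (i k : Fin m) :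
    (((X * Y) i k : R) : A) = ∑ l, ((X i l : R) : A) * ((Y l k : R) : A) := by
  simp [Matrix.mul_apply]

end Transfer

section Transfer2

open Filter Topology
open scoped Matrix
attribute [local instance] Matrix.linftyOpNormedRing Matrix.linftyOpNormedAlgebra
  Matrix.linftyOpNormedAddCommGroup Matrix.linftyOpNormedSpace

variable {A : Type*} [NormedRing A] [NormedAlgebra ℂ A] [CompleteSpace A] [NormOneClass A]
  {R : Subalgebra ℂ A} {ψ : ℕ → A →ₗ[ℂ] A}

lemma aux_approx_const (hψid : ∀ a ∈ R, Tendsto (fun j => ‖ψ j a - a‖) atTop (𝓝 0))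
    (x : R) : ApproxSeq ψ (fun _ => (x : A)) (x : A) :=
  squeeze_zero (fun _ => norm_nonneg _) (fun _ => le_of_eq (norm_sub_rev _ _))
    (hψid (x : A) x.2)

lemma aux_entry_mul_approx (hψcontr : ∀ j a, ‖ψ j a‖ ≤ ‖a‖)
    (hψmul : ∀ a b : A, Tendsto (fun j => ‖ψ j (a * b) - ψ j a * ψ j b‖) atTop (𝓝 0))
    {m : ℕ} {M N : ℕ → Matrix (Fin m) (Fin m) R} {T1 T2 : Matrix (Fin m) (Fin m) A}
    (hM : ∀ i k, ApproxSeq ψ (fun j => ((M j i k : R) : A)) (T1 i k))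
    (hN : ∀ i k, ApproxSeq ψ (fun j => ((N j i k : R) : A)) (T2 i k)) (i k : Fin m) :
    ApproxSeq ψ (fun j => (((M j * N j) i k : R) : A)) ((T1 * T2) i k) := by
  have heq : (fun j => (((M j * N j) i k : R) : A))
      = fun j => ∑ l, ((M j i l : R) : A) * ((N j l k : R) : A) := by
    funext j; exact aux_coe_mul_entry _ _ _ _
  rw [heq, Matrix.mul_apply]
  exact approxSeq_sum ψ _ _ _ fun l _ => approxSeq_mul ψ hψcontr hψmul (hM i l) (hN l k)

lemma aux_coord_tendsto (hψcontr : ∀ j a, ‖ψ j a‖ ≤ ‖a‖)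
    (hψmul : ∀ a b : A, Tendsto (fun j => ‖ψ j (a * b) - ψ j a * ψ j b‖) atTop (𝓝 0))
    (hψid : ∀ a ∈ R, Tendsto (fun j => ‖ψ j a - a‖) atTop (𝓝 0))
    {m : ℕ} {M : ℕ → Matrix (Fin m) (Fin m) R} {T : Matrix (Fin m) (Fin m) A}
    (hM : ∀ i k, ApproxSeq ψ (fun j => ((M j i k : R) : A)) (T i k))
    (v w : Fin m → R) (hTv : T.mulVec (fun i => (v i : A)) = fun i => (w i : A)) (i : Fin m) :
    Tendsto (fun j => ‖(((M j).mulVec v i : R) : A) - ((w i : R) : A)‖) atTop (𝓝 0) := by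
  have heq : (fun j => (((M j).mulVec v i : R) : A))
      = fun j => ∑ l, ((M j i l : R) : A) * ((v l : R) : A) := by
    funext j; simp [Matrix.mulVec, dotProduct]
  have happ : ApproxSeq ψ (fun j => (((M j).mulVec v i : R) : A)) ((w i : A)) := by
    rw [heq]
    have h2 : ((w i : R) : A) = ∑ l, T i l * ((v l : R) : A) := by
      have h := congrFun hTv i
      simp only [Matrix.mulVec, dotProduct] at h
      exact h.symm
    rw [h2]
    exact approxSeq_sum ψ _ _ _ fun l _ =>
      approxSeq_mul ψ hψcontr hψmul (hM i l) (aux_approx_const hψid (v l))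
  exact approxSeq_tendsto ψ happ (hψid _ (w i).2)

lemma aux_one_sub_mul_tendsto (hψone : ∀ j, ψ j 1 = 1) (hψcontr : ∀ j a, ‖ψ j a‖ ≤ ‖a‖)
    (hψmul : ∀ a b : A, Tendsto (fun j => ‖ψ j (a * b) - ψ j a * ψ j b‖) atTop (𝓝 0))
    {m : ℕ} {M N : ℕ → Matrix (Fin m) (Fin m) R} {T1 T2 : Matrix (Fin m) (Fin m) A}
    (hT12 : T1 * T2 = 1)
    (hM : ∀ i k, ApproxSeq ψ (fun j => ((M j i k : R) : A)) (T1 i k))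
    (hN : ∀ i k, ApproxSeq ψ (fun j => ((N j i k : R) : A)) (T2 i k)) :
    Tendsto (fun j => ‖(1 : Matrix (Fin m) (Fin m) R) - M j * N j‖) atTop (𝓝 0) := by
  have hent : ∀ i k, Tendsto
      (fun j => ‖((1 : Matrix (Fin m) (Fin m) R) - M j * N j) i k‖) atTop (𝓝 0) := by
    intro i k
    have h1 : ApproxSeq ψ (fun j => (((M j * N j) i k : R) : A))
        ((1 : Matrix (Fin m) (Fin m) A) i k) := by
      have h := aux_entry_mul_approx hψcontr hψmul hM hN i k
      rwa [hT12] at h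
    have h2 : Tendsto (fun j => ‖(((M j * N j) i k : R) : A)
        - (1 : Matrix (Fin m) (Fin m) A) i k‖) atTop (𝓝 0) := by
      refine approxSeq_tendsto ψ h1 ?_
      by_cases h : i = k
      · subst h
        simpa [Matrix.one_apply_eq, hψone] using tendsto_const_nhds (α := ℝ) (f := atTop)
      · simpa [Matrix.one_apply_ne h] using tendsto_const_nhds (α := ℝ) (f := atTop)
    refine squeeze_zero (fun j => norm_nonneg _) (fun j => le_of_eq ?_) h2
    rw [Matrix.sub_apply, ← aux_coe_norm, AddSubgroupClass.coe_sub, aux_coe_one_entry,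
      norm_sub_rev]
  have hb : ∀ j, ‖(1 : Matrix (Fin m) (Fin m) R) - M j * N j‖
      ≤ ∑ i, ∑ k, ‖((1 : Matrix (Fin m) (Fin m) R) - M j * N j) i k‖ :=
    fun j => aux_norm_le_sum _
  refine squeeze_zero (fun j => norm_nonneg _) hb ?_
  have h := tendsto_finset_sum (Finset.univ : Finset (Fin m))
    (fun i _ => tendsto_finset_sum (Finset.univ : Finset (Fin m)) (fun k _ => hent i k))
  simpa using h

end Transfer2

section Transfer3

open Filter Topology
open scoped Matrix
attribute [local instance] Matrix.linftyOpNormedRing Matrix.linftyOpNormedAlgebra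
  Matrix.linftyOpNormedAddCommGroup Matrix.linftyOpNormedSpace

variable {A : Type*} [NormedRing A] [NormedAlgebra ℂ A] [CompleteSpace A] [NormOneClass A]
  {R : Subalgebra ℂ A} {ψ : ℕ → A →ₗ[ℂ] A}

lemma aux_Q (hRc : IsClosed (R : Set A)) (hψfix : ∀ j a, ψ j a ∈ R) (hψone : ∀ j, ψ j 1 = 1)
    (hψcontr : ∀ j a, ‖ψ j a‖ ≤ ‖a‖)
    (hψmul : ∀ a b : A, Tendsto (fun j => ‖ψ j (a * b) - ψ j a * ψ j b‖) atTop (𝓝 0))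
    {m : ℕ} [Nonempty (Fin m)] (T : (Matrix (Fin m) (Fin m) A)ˣ)
    (hT : T ∈ connectedComponent (1 : (Matrix (Fin m) (Fin m) A)ˣ)) :
    ∃ U : ℕ → (Matrix (Fin m) (Fin m) R)ˣ, ∃ C : ℝ,
      (∀ j, U j ∈ connectedComponent (1 : (Matrix (Fin m) (Fin m) R)ˣ)) ∧
      (∀ j, ‖(U j).val‖ ≤ C) ∧ (∀ j, ‖((U j)⁻¹).val‖ ≤ C) ∧
      (∀ i k, ApproxSeq ψ (fun j => (((U j).val i k : R) : A)) (T.val i k)) := by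
  haveI : CompleteSpace R := hRc.completeSpace_coe
  haveI : NormOneClass R := aux_normOneClass
  haveI : @CompleteSpace (Matrix (Fin m) (Fin m) A) PseudoMetricSpace.toUniformSpace :=
    Matrix.instCompleteSpace _ _ _
  haveI : @CompleteSpace (Matrix (Fin m) (Fin m) R) PseudoMetricSpace.toUniformSpace :=
    Matrix.instCompleteSpace _ _ _
  have hcl := aux_mem_closure_ball T hT
  clear hT
  induction hcl using Subgroup.closure_induction with
  | mem u hu =>
      set r := ‖(u.val : Matrix (Fin m) (Fin m) A) - 1‖ with hr
      have hr1 : r < 1 := hu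
      have hr0 : 0 ≤ r := norm_nonneg _
      have hPnorm : ∀ j, ‖(1 : Matrix (Fin m) (Fin m) R) - psiMat ψ hψfix j u.val‖ ≤ r := by
        intro j
        refine le_trans (aux_norm_le_of_entry _ ((1 : Matrix (Fin m) (Fin m) A) - u.val) ?_) ?_
        · intro i k
          rw [Matrix.sub_apply, ← aux_coe_norm, AddSubgroupClass.coe_sub, aux_coe_one_entry,
            psiMat_coe]
          have he : (1 : Matrix (Fin m) (Fin m) A) i k - ψ j (u.val i k)
              = ψ j (((1 : Matrix (Fin m) (Fin m) A) - u.val) i k) := by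
            rw [Matrix.sub_apply, map_sub, aux_psi_one_entry hψone]
          rw [he, Matrix.sub_apply]
          exact hψcontr j _
        · rw [norm_sub_rev]
      set U : ℕ → (Matrix (Fin m) (Fin m) R)ˣ := fun j =>
        Units.oneSub ((1 : Matrix (Fin m) (Fin m) R) - psiMat ψ hψfix j u.val)
          (lt_of_le_of_lt (hPnorm j) hr1) with hU
      have hUval : ∀ j, (U j).val = psiMat ψ hψfix j u.val := fun j => sub_sub_cancel _ _
      refine ⟨U, max (r + 1) ((1 - r)⁻¹), ?_, ?_, ?_, ?_⟩
      · intro j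
        refine aux_mem_connectedComponent_one (U j) ?_
        rw [hUval j, norm_sub_rev]
        exact lt_of_le_of_lt (hPnorm j) hr1
      · intro j
        refine le_trans ?_ (le_max_left _ _)
        rw [hUval j]
        calc ‖psiMat ψ hψfix j u.val‖
            = ‖(psiMat ψ hψfix j u.val - 1) + 1‖ := by rw [sub_add_cancel]
        _ ≤ ‖psiMat ψ hψfix j u.val - 1‖ + ‖(1 : Matrix (Fin m) (Fin m) R)‖ := norm_add_le _ _
        _ ≤ r + 1 := by
            rw [norm_one]
            have := hPnorm j
            rw [norm_sub_rev] at this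
            exact add_le_add_left this 1
      · intro j
        refine le_trans (aux_inv_norm_le hr1 ?_) (le_max_right _ _)
        rw [hUval j]
        exact hPnorm j
      · intro i k
        have heq : (fun j => (((U j).val i k : R) : A)) = fun j => ψ j (u.val i k) := by
          funext j; rw [hUval j]; rfl
        rw [heq]
        exact approxSeq_psi ψ _
  | one =>
      refine ⟨fun _ => 1, 1, fun _ => mem_connectedComponent, ?_, ?_, ?_⟩
      · intro j; rw [Units.val_one, norm_one]
      · intro j; rw [inv_one, Units.val_one, norm_one]
      · intro i k
        have heq : (fun j : ℕ => ((((1 : (Matrix (Fin m) (Fin m) R)ˣ)).val i k : R) : A))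
            = fun _ : ℕ => (1 : Matrix (Fin m) (Fin m) A) i k := by
          funext j; rw [Units.val_one, aux_coe_one_entry]
        show ApproxSeq ψ (fun j => ((((1 : (Matrix (Fin m) (Fin m) R)ˣ)).val i k : R) : A))
          ((1 : (Matrix (Fin m) (Fin m) A)ˣ).val i k)
        rw [heq, Units.val_one]
        have : (fun j : ℕ => ‖(1 : Matrix (Fin m) (Fin m) A) i k
            - ψ j ((1 : Matrix (Fin m) (Fin m) A) i k)‖) = fun _ => 0 := by
          funext j; rw [aux_psi_one_entry hψone, sub_self, norm_zero]
        show Tendsto _ atTop (𝓝 0)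
        rw [this]
        exact tendsto_const_nhds
  | mul x y hx hy ihx ihy =>
      obtain ⟨U1, C1, h11, h12, h13, h14⟩ := ihx
      obtain ⟨U2, C2, h21, h22, h23, h24⟩ := ihy
      have hC1 : 0 ≤ C1 := le_trans (norm_nonneg _) (h12 0)
      have hC2 : 0 ≤ C2 := le_trans (norm_nonneg _) (h22 0)
      refine ⟨fun j => U1 j * U2 j, C1 * C2, ?_, ?_, ?_, ?_⟩
      · exact fun j => mul_mem_connectedComponent_one (h11 j) (h21 j)
      · intro j
        rw [Units.val_mul]
        exact le_trans (norm_mul_le _ _) (mul_le_mul (h12 j) (h22 j) (norm_nonneg _) hC1)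
      · intro j
        rw [mul_inv_rev, Units.val_mul]
        refine le_trans (norm_mul_le _ _) ?_
        rw [mul_comm C1 C2]
        exact mul_le_mul (h23 j) (h13 j) (norm_nonneg _) hC2
      · intro i k
        have h := aux_entry_mul_approx hψcontr hψmul h14 h24 i k
        simp only [Units.val_mul]
        exact h
  | inv x hx ihx =>
      obtain ⟨U, C, h1, h2, h3, h4⟩ := ihx
      have hC : 0 ≤ C := le_trans (norm_nonneg _) (h2 0)
      set N : ℕ → Matrix (Fin m) (Fin m) R := fun j => psiMat ψ hψfix j ((x⁻¹).val) with hNdef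
      have hN : ∀ i k, ApproxSeq ψ (fun j => ((N j i k : R) : A)) ((x⁻¹).val i k) :=
        fun i k => approxSeq_psi ψ _
      have hxinv : x.val * (x⁻¹).val = 1 := x.mul_inv
      have hD : Tendsto (fun j => ‖(1 : Matrix (Fin m) (Fin m) R) - (U j).val * N j‖)
          atTop (𝓝 0) :=
        aux_one_sub_mul_tendsto hψone hψcontr hψmul hxinv h4 hN
      have hdiff : ∀ j, ((U j)⁻¹).val - N j
          = ((U j)⁻¹).val * ((1 : Matrix (Fin m) (Fin m) R) - (U j).val * N j) := by
        intro j
        rw [mul_sub, mul_one, ← mul_assoc, Units.inv_mul, one_mul]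
      have hnorm2 : Tendsto (fun j => ‖((U j)⁻¹).val - N j‖) atTop (𝓝 0) := by
        refine squeeze_zero (fun j => norm_nonneg _) (fun j => ?_)
          (by simpa using hD.const_mul C)
        rw [hdiff j]
        exact le_trans (norm_mul_le _ _) (mul_le_mul_of_nonneg_right (h3 j) (norm_nonneg _))
      refine ⟨fun j => (U j)⁻¹, C, fun j => inv_mem_connectedComponent_one (h1 j), h3,
        fun j => by rw [inv_inv]; exact h2 j, ?_⟩
      intro i k
      show Tendsto (fun j => ‖((((U j)⁻¹).val i k : R) : A) - ψ j ((x⁻¹).val i k)‖) atTop (𝓝 0)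
      refine squeeze_zero (fun j => norm_nonneg _) (fun j => ?_) hnorm2
      have he : ((((U j)⁻¹).val i k : R) : A) - ψ j ((x⁻¹).val i k)
          = (((((U j)⁻¹).val - N j) i k : R) : A) := by
        rw [Matrix.sub_apply, AddSubgroupClass.coe_sub]
        rfl
      rw [he, aux_coe_norm]
      exact aux_entry_norm_le _ i k

end Transfer3

section Transfer4

open Filter Topology
open scoped Matrix
attribute [local instance] Matrix.linftyOpNormedRing Matrix.linftyOpNormedAlgebra
  Matrix.linftyOpNormedAddCommGroup Matrix.linftyOpNormedSpace

variable {A : Type*} [NormedRing A] [NormedAlgebra ℂ A] [CompleteSpace A] [NormOneClass A]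
  {R : Subalgebra ℂ A} {ψ : ℕ → A →ₗ[ℂ] A}

lemma aux_unimodular_coe {m : ℕ} {v : Fin m → R} (hv : IsLeftUnimodular v) :
    IsLeftUnimodular (fun i => ((v i : R) : A)) := by
  obtain ⟨b, hb⟩ := hv
  refine ⟨fun i => ((b i : R) : A), ?_⟩
  have h := congrArg (Subalgebra.val R) hb
  simpa [map_sum, map_mul] using h

lemma aux_transfer_GLZero (hRc : IsClosed (R : Set A)) (hψfix : ∀ j a, ψ j a ∈ R)
    (hψone : ∀ j, ψ j 1 = 1) (hψcontr : ∀ j a, ‖ψ j a‖ ≤ ‖a‖)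
    (hψmul : ∀ a b : A, Tendsto (fun j => ‖ψ j (a * b) - ψ j a * ψ j b‖) atTop (𝓝 0))
    (hψid : ∀ a ∈ R, Tendsto (fun j => ‖ψ j a - a‖) atTop (𝓝 0))
    {m : ℕ} (hA : GLZeroActsTransitively A m) : GLZeroActsTransitively R m := by
  haveI : CompleteSpace R := hRc.completeSpace_coe
  haveI : NormOneClass R := aux_normOneClass
  intro v w hv hw
  rcases Nat.eq_zero_or_pos m with hm | hm
  · subst hm
    exact ⟨1, mem_connectedComponent,
      by rw [Units.val_one, Matrix.one_mulVec, Subsingleton.elim v w]⟩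
  haveI : Nonempty (Fin m) := ⟨⟨0, hm⟩⟩
  obtain ⟨bw, hbw⟩ := id hw
  obtain ⟨T, hT1, hTv⟩ := hA _ _ (aux_unimodular_coe hv) (aux_unimodular_coe hw)
  obtain ⟨U, C, hU1, hU2, hU3, hU4⟩ := aux_Q hRc hψfix hψone hψcontr hψmul T hT1
  have hcoord : ∀ i, Tendsto
      (fun j => ‖(((U j).val.mulVec v i : R) : A) - ((w i : R) : A)‖) atTop (𝓝 0) :=
    fun i => aux_coord_tendsto hψcontr hψmul hψid hU4 v w hTv i
  have hε0 : 0 < 1 / (2 * ((∑ k, ‖bw k‖) + 1)) := by positivity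
  have hev : ∀ᶠ j in atTop, ∀ i,
      ‖(U j).val.mulVec v i - w i‖ < 1 / (2 * ((∑ k, ‖bw k‖) + 1)) := by
    rw [Filter.eventually_all]
    intro i
    refine ((hcoord i).eventually (gt_mem_nhds hε0)).mono fun j hj => ?_
    rw [← aux_coe_norm, AddSubgroupClass.coe_sub]
    exact hj
  obtain ⟨j, hj⟩ := hev.exists
  obtain ⟨E, hE1, hE2⟩ := aux_corrector w ((U j).val.mulVec v) bw hbw hj
  refine ⟨E * U j, mul_mem_connectedComponent_one hE1 (hU1 j), ?_⟩
  rw [Units.val_mul, ← Matrix.mulVec_mulVec]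
  exact hE2

lemma aux_transfer_GL (hRc : IsClosed (R : Set A)) (hψfix : ∀ j a, ψ j a ∈ R)
    (hψone : ∀ j, ψ j 1 = 1) (hψcontr : ∀ j a, ‖ψ j a‖ ≤ ‖a‖)
    (hψmul : ∀ a b : A, Tendsto (fun j => ‖ψ j (a * b) - ψ j a * ψ j b‖) atTop (𝓝 0))
    (hψid : ∀ a ∈ R, Tendsto (fun j => ‖ψ j a - a‖) atTop (𝓝 0))
    {m : ℕ} (hA : GLActsTransitively A m) : GLActsTransitively R m := by
  haveI : CompleteSpace R := hRc.completeSpace_coe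
  haveI : NormOneClass R := aux_normOneClass
  intro v w hv hw
  rcases Nat.eq_zero_or_pos m with hm | hm
  · subst hm
    exact ⟨1, by rw [Units.val_one, Matrix.one_mulVec, Subsingleton.elim v w]⟩
  haveI : Nonempty (Fin m) := ⟨⟨0, hm⟩⟩
  haveI : @CompleteSpace (Matrix (Fin m) (Fin m) R) PseudoMetricSpace.toUniformSpace :=
    Matrix.instCompleteSpace _ _ _
  obtain ⟨bw, hbw⟩ := id hw
  obtain ⟨T, hTv⟩ := hA _ _ (aux_unimodular_coe hv) (aux_unimodular_coe hw)
  set M : ℕ → Matrix (Fin m) (Fin m) R := fun j => psiMat ψ hψfix j T.val with hMdef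
  set N : ℕ → Matrix (Fin m) (Fin m) R := fun j => psiMat ψ hψfix j ((T⁻¹).val) with hNdef
  have hM : ∀ i k, ApproxSeq ψ (fun j => ((M j i k : R) : A)) (T.val i k) :=
    fun i k => approxSeq_psi ψ _
  have hN : ∀ i k, ApproxSeq ψ (fun j => ((N j i k : R) : A)) ((T⁻¹).val i k) :=
    fun i k => approxSeq_psi ψ _
  have hMN : Tendsto (fun j => ‖(1 : Matrix (Fin m) (Fin m) R) - M j * N j‖) atTop (𝓝 0) :=
    aux_one_sub_mul_tendsto hψone hψcontr hψmul T.mul_inv hM hN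
  have hNM : Tendsto (fun j => ‖(1 : Matrix (Fin m) (Fin m) R) - N j * M j‖) atTop (𝓝 0) :=
    aux_one_sub_mul_tendsto hψone hψcontr hψmul T.inv_mul hN hM
  have hcoord : ∀ i, Tendsto
      (fun j => ‖(((M j).mulVec v i : R) : A) - ((w i : R) : A)‖) atTop (𝓝 0) :=
    fun i => aux_coord_tendsto hψcontr hψmul hψid hM v w hTv i
  have hε0 : 0 < 1 / (2 * ((∑ k, ‖bw k‖) + 1)) := by positivity
  have hev1 : ∀ᶠ j in atTop, ∀ i,
      ‖(M j).mulVec v i - w i‖ < 1 / (2 * ((∑ k, ‖bw k‖) + 1)) := by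
    rw [Filter.eventually_all]
    intro i
    refine ((hcoord i).eventually (gt_mem_nhds hε0)).mono fun j hj => ?_
    rw [← aux_coe_norm, AddSubgroupClass.coe_sub]
    exact hj
  have hev2 : ∀ᶠ j in atTop, ‖(1 : Matrix (Fin m) (Fin m) R) - M j * N j‖ < 1 :=
    hMN.eventually (gt_mem_nhds one_pos)
  have hev3 : ∀ᶠ j in atTop, ‖(1 : Matrix (Fin m) (Fin m) R) - N j * M j‖ < 1 :=
    hNM.eventually (gt_mem_nhds one_pos)
  obtain ⟨j, hj1, hj2, hj3⟩ := (hev1.and (hev2.and hev3)).exists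
  obtain ⟨Su, hSu⟩ := aux_isUnit_of_approx_inverse (s := M j) (a := N j) hj3 hj2
  obtain ⟨E, _, hE2⟩ := aux_corrector w ((M j).mulVec v) bw hbw hj1
  refine ⟨E * Su, ?_⟩
  rw [Units.val_mul, ← Matrix.mulVec_mulVec, hSu]
  exact hE2

end Transfer4

lemma aux_fixed_isClosed {A : Type*} [CStarAlgebra A] {G : Type*} [Group G]
    (α : G →* (A ≃ₐ[ℂ] A)) (hstar : ∀ g (a : A), α g (star a) = star (α g a)) :
    IsClosed {a : A | ∀ g, α g a = a} := by
  have hcont : ∀ g : G, Continuous (α g) := by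
    intro g
    let φ : A →⋆ₙₐ[ℂ] A :=
      { ((α g : A ≃ₐ[ℂ] A) : A →ₐ[ℂ] A).toNonUnitalAlgHom with map_star' := fun a => hstar g a }
    have hb : ∀ a : A, ‖φ a‖ ≤ 1 * ‖a‖ := fun a => by
      simpa using NonUnitalStarAlgHom.norm_apply_le φ a
    exact AddMonoidHomClass.continuous_of_bound φ 1 hb
  have heq : {a : A | ∀ g, α g a = a} = ⋂ g : G, {a : A | α g a = a} := by
    ext a; simp [Set.mem_iInter]
  rw [heq]
  exact isClosed_iInter fun g => isClosed_eq (hcont g) continuous_id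

/-- Let `α : G → Aut(A)` be an action of a finite group on a unital separable C*-algebra
`A` with the Rokhlin property, and suppose there are unital linear contractions
`ψ_j : A → A^α` that are asymptotically multiplicative and asymptotically the identity on
`A^α` (Gardella).  Then `csr (A^α) ≤ csr A` and `gsr (A^α) ≤ gsr A`. -/
theorem stmt_18 {A : Type*} [NormedRing A] [StarRing A] [CStarRing A]
    [NormedAlgebra ℂ A] [CompleteSpace A] [StarModule ℂ A]
    [TopologicalSpace.SeparableSpace A]
    {G : Type*} [Group G] [Fintype G] (α : G →* (A ≃ₐ[ℂ] A))
    (hstar : ∀ g (a : A), α g (star a) = star (α g a))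
    (hrok : RokhlinProperty α)
    (ψ : ℕ → A →ₗ[ℂ] A)
    (hψfix : ∀ j a, ψ j a ∈ fixedSubalgebra α)
    (hψone : ∀ j, ψ j 1 = 1)
    (hψcontr : ∀ j a, ‖ψ j a‖ ≤ ‖a‖)
    (hψmul : ∀ a b : A,
      Filter.Tendsto (fun j => ‖ψ j (a * b) - ψ j a * ψ j b‖) Filter.atTop (nhds 0))
    (hψid : ∀ a ∈ fixedSubalgebra α,
      Filter.Tendsto (fun j => ‖ψ j a - a‖) Filter.atTop (nhds 0)) :
    csr (fixedSubalgebra α) ≤ csr A ∧ gsr (fixedSubalgebra α) ≤ gsr A := by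
  rcases subsingleton_or_nontrivial A with hA | hA
  · -- the degenerate case of a trivial algebra
    haveI : Subsingleton (fixedSubalgebra α) := ⟨fun a b => Subtype.ext (Subsingleton.elim _ _)⟩
    constructor
    · refine le_trans (sInf_le ?_) (le_sInf fun n hn => hn.1)
      exact ⟨le_refl 1, fun m _ v w _ _ =>
        ⟨1, mem_connectedComponent, funext fun i => Subsingleton.elim _ _⟩⟩
    · refine le_trans (sInf_le ?_) (le_sInf fun n hn => hn.1)
      exact ⟨le_refl 1, fun m _ v w _ _ => ⟨1, funext fun i => Subsingleton.elim _ _⟩⟩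
  · haveI : NormOneClass A := inferInstance
    have hRc : IsClosed ((fixedSubalgebra α : Subalgebra ℂ A) : Set A) := by
      letI : CStarAlgebra A := { }
      exact aux_fixed_isClosed α hstar
    constructor
    · refine sInf_le_sInf ?_
      intro n hn
      exact ⟨hn.1, fun m hm =>
        aux_transfer_GLZero hRc hψfix hψone hψcontr hψmul hψid (hn.2 m hm)⟩
    · refine sInf_le_sInf ?_
      intro n hn
      exact ⟨hn.1, fun m hm =>
        aux_transfer_GL hRc hψfix hψone hψcontr hψmul hψid (hn.2 m hm)⟩
end
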